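/- For a probability distribution ψ on nonnegative integers with finite second moment, the truncation f_M(ψ) that moves all mass from {E > M} onto the point E = M does not increase the variance: Var(f_M(ψ)) ≤ Var(ψ). -/

import Mathlib

/-- The truncation `f_M(ψ)` of a distribution on `ℕ`: probabilities below `M` are kept, and all
mass from `{E ≥ M}` is placed at the point `E = M`. -/
noncomputable def truncate (ψ : ℕ → ℝ) (M : ℕ) : ℕ → ℝ := fun E =>
  if E < M then ψ E
  else if E = M then ∑' E' : ℕ, (if M ≤ E' then ψ E' else 0)
  else 0

/-- Mean of a distribution on `ℕ`. -/
noncomputable def distMean (ψ : ℕ → ℝ) : ℝ := ∑' E : ℕ, ψ E * E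

/-- Variance of a distribution on `ℕ`. -/
noncomputable def distVar (ψ : ℕ → ℝ) : ℝ :=
  (∑' E : ℕ, ψ E * (E : ℝ) ^ 2) - (distMean ψ) ^ 2

/-- For a probability distribution `ψ` on `ℕ` with finite second moment,
the truncation `f_M(ψ)` (mass beyond `M` moved to the point `M`) does not increase the variance:
`Var(f_M(ψ)) ≤ Var(ψ)`. -/
theorem truncation_var_le (ψ : ℕ → ℝ) (hpos : ∀ E, 0 ≤ ψ E) (hsum : HasSum ψ 1)
    (h2 : Summable fun E => ψ E * (E : ℝ) ^ 2) (M : ℕ) :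
    distVar (truncate ψ M) ≤ distVar ψ := by
  classical
  have hs0 : Summable ψ := hsum.summable
  have hs1 : Summable (fun E => ψ E * (E : ℝ)) := by
    apply Summable.of_nonneg_of_le (fun E => mul_nonneg (hpos E) (Nat.cast_nonneg E))
      (fun E => ?_) (hs0.add h2)
    have h1 : (E : ℝ) ≤ 1 + (E : ℝ) ^ 2 := by nlinarith [sq_nonneg ((E : ℝ) - 1)]
    have := mul_le_mul_of_nonneg_left h1 (hpos E)
    simpa [mul_add] using this
  -- summability of tail pieces
  have ite_nonneg : ∀ (f : ℕ → ℝ), (∀ E, 0 ≤ f E) → ∀ E, (0 : ℝ) ≤ if M ≤ E then f E else 0 := by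
    intro f hf E; split_ifs <;> simp [hf E]
  have ite_le : ∀ (f : ℕ → ℝ), (∀ E, 0 ≤ f E) → ∀ E, (if M ≤ E then f E else 0) ≤ f E := by
    intro f hf E; split_ifs <;> simp [hf E]
  have hψpos : ∀ E, 0 ≤ ψ E * (E : ℝ) := fun E => mul_nonneg (hpos E) (Nat.cast_nonneg E)
  have hψ2pos : ∀ E, 0 ≤ ψ E * (E : ℝ) ^ 2 := fun E => mul_nonneg (hpos E) (sq_nonneg _)
  have hg0 : Summable (fun E => if M ≤ E then ψ E else 0) :=
    Summable.of_nonneg_of_le (ite_nonneg ψ hpos) (ite_le ψ hpos) hs0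
  have hg1 : Summable (fun E => if M ≤ E then ψ E * (E : ℝ) else 0) :=
    Summable.of_nonneg_of_le (ite_nonneg _ hψpos) (ite_le _ hψpos) hs1
  have hg2 : Summable (fun E => if M ≤ E then ψ E * (E : ℝ) ^ 2 else 0) :=
    Summable.of_nonneg_of_le (ite_nonneg _ hψ2pos) (ite_le _ hψ2pos) h2
  set δ : ℝ := ∑' E : ℕ, (if M ≤ E then ψ E else 0) with hδdef
  set T1 : ℝ := ∑' E : ℕ, (if M ≤ E then ψ E * (E : ℝ) else 0) with hT1def
  set T2 : ℝ := ∑' E : ℕ, (if M ≤ E then ψ E * (E : ℝ) ^ 2 else 0) with hT2def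
  set A : ℝ := ∑ E ∈ Finset.range M, ψ E * (E : ℝ) with hAdef
  set B : ℝ := ∑ E ∈ Finset.range M, ψ E * (E : ℝ) ^ 2 with hBdef
  -- generic splitting lemma
  have split : ∀ (f : ℕ → ℝ), Summable f → Summable (fun E => if M ≤ E then f E else 0) →
      (∑' E, f E) = (∑ E ∈ Finset.range M, f E) + ∑' E, (if M ≤ E then f E else 0) := by
    intro f hf hg
    have hpt : ∀ E, f E = (if E < M then f E else 0) + (if M ≤ E then f E else 0) := by
      intro E
      by_cases h : E < M
      · simp [h, not_le.2 h]
      · simp [h, not_lt.1 h]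
    have hlow : Summable (fun E => if E < M then f E else 0) := by
      apply summable_of_finite_support
      apply Set.Finite.subset (Set.finite_Iio M)
      intro E hE
      simp only [Function.mem_support] at hE
      by_contra h
      simp only [Set.mem_Iio, not_lt] at h
      exact hE (by simp [not_lt.2 h])
    have := Summable.tsum_add hlow hg
    calc ∑' E, f E = ∑' E, ((if E < M then f E else 0) + (if M ≤ E then f E else 0)) :=
          tsum_congr hpt
      _ = (∑' E, (if E < M then f E else 0)) + ∑' E, (if M ≤ E then f E else 0) := this
      _ = (∑ E ∈ Finset.range M, f E) + ∑' E, (if M ≤ E then f E else 0) := by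
          congr 1
          rw [tsum_eq_sum (s := Finset.range M)]
          · exact Finset.sum_congr rfl fun E hE => by simp [Finset.mem_range.1 hE]
          · intro E hE
            simp [not_lt.1 (by simpa using hE)]
  have hsplit0 : (1 : ℝ) = (∑ E ∈ Finset.range M, ψ E) + δ := by
    rw [← hsum.tsum_eq]; exact split ψ hs0 hg0
  have hmean : distMean ψ = A + T1 := split _ hs1 hg1
  have hsq : (∑' E : ℕ, ψ E * (E : ℝ) ^ 2) = B + T2 := split _ h2 hg2
  -- sums for the truncated distribution
  have htrunc1 : distMean (truncate ψ M) = A + δ * M := by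
    rw [distMean, tsum_eq_sum (s := Finset.range (M + 1))]
    · rw [Finset.sum_range_succ]
      congr 1
      · exact Finset.sum_congr rfl fun E hE => by
          simp [truncate, Finset.mem_range.1 hE]
      · simp [truncate, hδdef]
    · intro E hE
      have : M < E := by simpa using Finset.mem_range.not.1 hE
      simp [truncate, not_lt.2 this.le, this.ne']
  have htrunc2 : (∑' E : ℕ, truncate ψ M E * (E : ℝ) ^ 2) = B + δ * (M : ℝ) ^ 2 := by
    rw [tsum_eq_sum (s := Finset.range (M + 1))]
    · rw [Finset.sum_range_succ]
      congr 1
      · exact Finset.sum_congr rfl fun E hE => by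
          simp [truncate, Finset.mem_range.1 hE]
      · simp [truncate, hδdef]
    · intro E hE
      have : M < E := by simpa using Finset.mem_range.not.1 hE
      simp [truncate, not_lt.2 this.le, this.ne']
  -- basic facts
  have hδ0 : 0 ≤ δ := tsum_nonneg (ite_nonneg ψ hpos)
  have hT1_0 : 0 ≤ T1 := tsum_nonneg (ite_nonneg _ hψpos)
  have hT2_0 : 0 ≤ T2 := tsum_nonneg (ite_nonneg _ hψ2pos)
  have hδ1 : δ ≤ 1 := by
    rw [← hsum.tsum_eq]
    exact Summable.tsum_le_tsum (ite_le ψ hpos) hg0 hs0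
  have hA0 : 0 ≤ A := Finset.sum_nonneg fun E _ => hψpos E
  have hAle : A ≤ (1 - δ) * M := by
    have h1 : A ≤ (∑ E ∈ Finset.range M, ψ E) * M := by
      rw [Finset.sum_mul]
      apply Finset.sum_le_sum
      intro E hE
      have : (E : ℝ) ≤ M := by exact_mod_cast (Finset.mem_range.1 hE).le
      exact mul_le_mul_of_nonneg_left this (hpos E)
    have h2' : (∑ E ∈ Finset.range M, ψ E) = 1 - δ := by linarith [hsplit0]
    rwa [h2'] at h1
  have hT1M : δ * M ≤ T1 := by
    have : δ * M = ∑' E : ℕ, (if M ≤ E then ψ E else 0) * (M : ℝ) := (tsum_mul_right).symm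
    rw [this]
    apply Summable.tsum_le_tsum _ (hg0.mul_right _) hg1
    intro E
    by_cases h : M ≤ E
    · simp only [h, if_true]
      exact mul_le_mul_of_nonneg_left (by exact_mod_cast h) (hpos E)
    · simp [h]
  -- Cauchy–Schwarz: T1^2 ≤ δ * T2
  have hCS : T1 ^ 2 ≤ δ * T2 := by
    have key : ∀ s : Finset ℕ,
        (∑ E ∈ s, (if M ≤ E then ψ E * (E : ℝ) else 0)) ≤ Real.sqrt (δ * T2) := by
      intro s
      have hcs := Finset.sum_sq_le_sum_mul_sum_of_sq_eq_mul s
        (f := fun E => if M ≤ E then ψ E else 0)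
        (g := fun E => if M ≤ E then ψ E * (E : ℝ) ^ 2 else 0)
        (r := fun E => if M ≤ E then ψ E * (E : ℝ) else 0)
        (fun E _ => ite_nonneg ψ hpos E) (fun E _ => ite_nonneg _ hψ2pos E)
        (fun E _ => by split_ifs <;> ring)
      have h1 : (∑ E ∈ s, (if M ≤ E then ψ E else 0)) ≤ δ :=
        Summable.sum_le_tsum s (fun E _ => ite_nonneg ψ hpos E) hg0
      have h2' : (∑ E ∈ s, (if M ≤ E then ψ E * (E : ℝ) ^ 2 else 0)) ≤ T2 :=
        Summable.sum_le_tsum s (fun E _ => ite_nonneg _ hψ2pos E) hg2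
      have hδT2 : (∑ E ∈ s, (if M ≤ E then ψ E * (E : ℝ) else 0)) ^ 2 ≤ δ * T2 := by
        refine hcs.trans (mul_le_mul h1 h2' (Finset.sum_nonneg fun E _ => ite_nonneg _ hψ2pos E) hδ0)
      exact Real.le_sqrt_of_sq_le hδT2
    have hT1le : T1 ≤ Real.sqrt (δ * T2) := Summable.tsum_le_of_sum_le hg1 key
    calc T1 ^ 2 ≤ Real.sqrt (δ * T2) ^ 2 := by
          apply pow_le_pow_left₀ hT1_0 hT1le
      _ = δ * T2 := Real.sq_sqrt (mul_nonneg hδ0 hT2_0)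
  -- put everything together
  rw [distVar, distVar, hmean, hsq, htrunc1, htrunc2]
  rcases eq_or_lt_of_le hδ0 with hδz | hδp
  · -- δ = 0 : all tail mass vanishes
    have hzero : ∀ E, M ≤ E → ψ E = 0 := by
      intro E hE
      have h1 : (if M ≤ E then ψ E else 0) ≤ δ :=
        Summable.le_tsum hg0 E fun i _ => ite_nonneg ψ hpos i
      rw [← hδz] at h1
      simp only [hE, if_true] at h1
      exact le_antisymm h1 (hpos E)
    have hT1z : T1 = 0 := by
      rw [hT1def]
      convert tsum_zero with E
      split_ifs with h
      · simp [hzero E h]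
      · rfl
    have hT2z : T2 = 0 := by
      rw [hT2def]
      convert tsum_zero with E
      split_ifs with h
      · simp [hzero E h]
      · rfl
    rw [hT1z, hT2z, ← hδz]
    ring_nf
    linarith
  · -- δ > 0
    have h1 : 0 ≤ δ * (T1 - δ * M) * ((1 - δ) * M - A) :=
      mul_nonneg (mul_nonneg hδ0 (by linarith)) (by linarith)
    have h2' : 0 ≤ (1 - δ) * (T1 - δ * M) ^ 2 :=
      mul_nonneg (by linarith) (sq_nonneg _)
    have key : 0 ≤ δ * ((B + T2 - (A + T1) ^ 2) - (B + δ * M ^ 2 - (A + δ * M) ^ 2)) := by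
      nlinarith [hCS, h1, h2']
    nlinarith [key, hδp]
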